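/- Let G be a finitely generated group with inverse-closed generating alphabet Σ = X ∪ X⁻¹. If the word problem WP(G, X) is a visibly pushdown language over some partition of Σ, then every generator x ∈ X has finite order in G. -/

import Mathlib

inductive VKind | call | internal | response
deriving DecidableEq

/-- A (nondeterministic) visibly pushdown automaton over alphabet `A`
partitioned by `kind` into call, internal and response letters. -/
structure VPA (A : Type) (kind : A → VKind) where
  Q : Type
  Γ : Type
  [finQ : Fintype Q]
  [finΓ : Fintype Γ]
  init : Q
  accept : Set Q
  /-- transitions on call letters: push one symbol, do not inspect the stack -/
  δc : Q → A → Set (Q × Γ)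
  /-- transitions on internal letters: do not inspect or modify the stack -/
  δi : Q → A → Set Q
  /-- transitions on response letters: pop the topmost stack symbol -/
  δr : Q → A → Γ → Set Q
  /-- transitions on response letters read on the empty stack (bottom symbol) -/
  δb : Q → A → Set Q

namespace VPA

variable {A : Type} {kind : A → VKind}

inductive Steps (M : VPA A kind) : M.Q × List M.Γ → List A → M.Q × List M.Γ → Prop
  | nil (c) : Steps M c [] c
  | call {q s a q' γ w c} : kind a = .call → (q', γ) ∈ M.δc q a →
      Steps M (q', γ :: s) w c → Steps M (q, s) (a :: w) c
  | internal {q s a q' w c} : kind a = .internal → q' ∈ M.δi q a →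
      Steps M (q', s) w c → Steps M (q, s) (a :: w) c
  | pop {q γ s a q' w c} : kind a = .response → q' ∈ M.δr q a γ →
      Steps M (q', s) w c → Steps M (q, γ :: s) (a :: w) c
  | popEmpty {q a q' w c} : kind a = .response → q' ∈ M.δb q a →
      Steps M (q', []) w c → Steps M (q, []) (a :: w) c

/-- A VPA accepts a word if reading it from the initial state with empty stack
can end in an accepting state (with arbitrary stack contents). -/
def Accepts (M : VPA A kind) (w : List A) : Prop :=
  ∃ c : M.Q × List M.Γ, M.Steps (M.init, []) w c ∧ c.1 ∈ M.accept

end VPA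

/-- `L` is a visibly pushdown language over the partition `kind`. -/
def IsVPL {A : Type} (kind : A → VKind) (L : Set (List A)) : Prop :=
  ∃ M : VPA A kind, L = {w | M.Accepts w}

namespace VPA

variable {A : Type} {kind : A → VKind}

variable (M : VPA A kind)

lemma steps_append {c c'' : M.Q × List M.Γ} {u v : List A}
    (h : M.Steps c (u ++ v) c'') : ∃ c', M.Steps c u c' ∧ M.Steps c' v c'' := by
  induction u generalizing c with
  | nil => exact ⟨c, .nil c, h⟩
  | cons x u ih =>
    cases h with
    | call hk ht hs => obtain ⟨c', h1, h2⟩ := ih hs; exact ⟨c', .call hk ht h1, h2⟩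
    | internal hk ht hs => obtain ⟨c', h1, h2⟩ := ih hs; exact ⟨c', .internal hk ht h1, h2⟩
    | pop hk ht hs => obtain ⟨c', h1, h2⟩ := ih hs; exact ⟨c', .pop hk ht h1, h2⟩
    | popEmpty hk ht hs => obtain ⟨c', h1, h2⟩ := ih hs; exact ⟨c', .popEmpty hk ht h1, h2⟩

lemma steps_trans {c c' c'' : M.Q × List M.Γ} {u v : List A}
    (h1 : M.Steps c u c') (h2 : M.Steps c' v c'') : M.Steps c (u ++ v) c'' := by
  induction h1 with
  | nil => exact h2
  | call hk ht _ ih => exact .call hk ht (ih h2)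
  | internal hk ht _ ih => exact .internal hk ht (ih h2)
  | pop hk ht _ ih => exact .pop hk ht (ih h2)
  | popEmpty hk ht _ ih => exact .popEmpty hk ht (ih h2)

lemma steps_nocall_empty {a : A} (ha : kind a ≠ VKind.call) :
    ∀ {n : ℕ} {q : M.Q} {c}, M.Steps (q, ([] : List M.Γ)) (List.replicate n a) c → c.2 = [] := by
  intro n
  induction n with
  | zero => intro q c h; cases h; rfl
  | succ n ih =>
    intro q c h
    rw [List.replicate_succ] at h
    cases h with
    | call hk _ _ => exact absurd hk ha
    | internal _ _ hs => exact ih hs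
    | popEmpty _ _ hs => exact ih hs

lemma steps_call_anyStack {b : A} (hb : kind b = VKind.call) :
    ∀ {n : ℕ} {q : M.Q} {st c}, M.Steps (q, st) (List.replicate n b) c →
      ∀ st', ∃ st'', M.Steps (q, st') (List.replicate n b) (c.1, st'') := by
  intro n
  induction n with
  | zero => intro q st c h st'; cases h; exact ⟨st', .nil _⟩
  | succ n ih =>
    intro q st c h st'
    rw [List.replicate_succ] at h ⊢
    cases h with
    | call hk ht hs =>
      obtain ⟨st'', h2⟩ := ih hs _
      exact ⟨st'', .call hk ht h2⟩
    | internal hk _ _ => rw [hb] at hk; cases hk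
    | pop hk _ _ => rw [hb] at hk; cases hk
    | popEmpty hk _ _ => rw [hb] at hk; cases hk

lemma exchange_nocall {a b : A} (ha : kind a ≠ VKind.call)
    (hacc : ∀ n : ℕ, M.Accepts (List.replicate n a ++ List.replicate n b)) :
    ∃ n m : ℕ, n ≠ m ∧ M.Accepts (List.replicate m a ++ List.replicate n b) := by
  haveI := M.finQ
  obtain ⟨n, m, hnm, hf⟩ := Finite.exists_ne_map_eq_of_infinite
    (fun n : ℕ => {q : M.Q | M.Steps (M.init, []) (List.replicate n a) (q, [])})
  refine ⟨n, m, hnm, ?_⟩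
  obtain ⟨c, hs, hacc'⟩ := hacc n
  obtain ⟨c', h1, h2⟩ := M.steps_append hs
  have he : c'.2 = [] := M.steps_nocall_empty ha h1
  have hq : c'.1 ∈ {q : M.Q | M.Steps (M.init, []) (List.replicate n a) (q, [])} := by
    simpa [← he] using h1
  rw [hf] at hq
  refine ⟨c, M.steps_trans hq ?_, hacc'⟩
  rwa [← he]

lemma exchange_call {a b : A} (ha : kind a = VKind.call) (hb : kind b = VKind.call)
    (hacc : ∀ n : ℕ, M.Accepts (List.replicate n a ++ List.replicate n b)) :
    ∃ n m : ℕ, n ≠ m ∧ M.Accepts (List.replicate m a ++ List.replicate n b) := by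
  haveI := M.finQ
  obtain ⟨n, m, hnm, hf⟩ := Finite.exists_ne_map_eq_of_infinite
    (fun n : ℕ => {q : M.Q | ∃ st, M.Steps (M.init, []) (List.replicate n a) (q, st)})
  refine ⟨n, m, hnm, ?_⟩
  obtain ⟨c, hs, hacc'⟩ := hacc n
  obtain ⟨c', h1, h2⟩ := M.steps_append hs
  have hq : c'.1 ∈ {q : M.Q | ∃ st, M.Steps (M.init, []) (List.replicate n a) (q, st)} :=
    ⟨c'.2, by simpa using h1⟩
  rw [hf] at hq
  obtain ⟨st', h1'⟩ := hq
  have h2' : M.Steps (c'.1, c'.2) (List.replicate n b) c := by simpa using h2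
  obtain ⟨st'', h2''⟩ := M.steps_call_anyStack hb h2' st'
  exact ⟨(c.1, st''), M.steps_trans h1' h2'', hacc'⟩

end VPA

/-- If the word problem of a finitely generated group is a visibly pushdown
language over some partition of the (inverse-closed) generating alphabet, then
every generator has finite order. -/
theorem generators_torsion_of_vpl_wordProblem {G : Type} [Group G]
    {A : Type} [Fintype A] (σ : A → G)
    (hinv : ∀ s : A, ∃ t : A, σ t = (σ s)⁻¹)
    (hgen : Subgroup.closure (Set.range σ) = ⊤)
    (kind : A → VKind)
    (h : IsVPL kind {w : List A | (w.map σ).prod = 1}) :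
    ∀ s : A, IsOfFinOrder (σ s) := by
  obtain ⟨M, hM⟩ := h
  intro s
  obtain ⟨t, ht⟩ := hinv s
  set g := σ s with hg
  have hmem : ∀ (a b : A) (n k : ℕ),
      M.Accepts (List.replicate n a ++ List.replicate k b) ↔ (σ a) ^ n * (σ b) ^ k = 1 := by
    intro a b n k
    have := Set.ext_iff.1 hM (List.replicate n a ++ List.replicate k b)
    simpa [List.map_append, List.map_replicate, List.prod_replicate] using this.symm
  have hfin : ∀ {n m : ℕ}, n ≠ m → g ^ n = g ^ m → IsOfFinOrder g := by
    intro n m hnm hpow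
    by_contra hf
    exact hnm (injective_pow_iff_not_isOfFinOrder.2 hf hpow)
  by_cases hks : kind s = VKind.call
  · by_cases hkt : kind t = VKind.call
    · have hacc : ∀ n : ℕ, M.Accepts (List.replicate n s ++ List.replicate n t) := by
        intro n; exact (hmem s t n n).2 (by rw [ht]; simp [inv_pow, ← hg])
      obtain ⟨n, m, hnm, hA⟩ := M.exchange_call hks hkt hacc
      have h1 := (hmem s t m n).1 hA
      rw [ht, inv_pow, mul_inv_eq_one] at h1
      exact hfin (Ne.symm hnm) h1
    · have hacc : ∀ n : ℕ, M.Accepts (List.replicate n t ++ List.replicate n s) := by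
        intro n; exact (hmem t s n n).2 (by rw [ht]; simp [inv_pow, ← hg])
      obtain ⟨n, m, hnm, hA⟩ := M.exchange_nocall hkt hacc
      have h1 := (hmem t s m n).1 hA
      rw [ht, inv_pow, inv_mul_eq_one] at h1
      exact hfin hnm h1.symm
  · have hacc : ∀ n : ℕ, M.Accepts (List.replicate n s ++ List.replicate n t) := by
      intro n; exact (hmem s t n n).2 (by rw [ht]; simp [inv_pow, ← hg])
    obtain ⟨n, m, hnm, hA⟩ := M.exchange_nocall hks hacc
    have h1 := (hmem s t m n).1 hA
    rw [ht, inv_pow, mul_inv_eq_one] at h1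
    exact hfin (Ne.symm hnm) h1
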